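/- Let h be a positive integer. For h ≥ 1 and all m with 2^h ≤ m ≤ (1 + √(m/(m−1)))^h, the generalised golden ratio of the ternary alphabet {0, 1, m/(m−1)} equals m^{1/h}. -/

import Mathlib

/-- Digit sequences over the ternary alphabet {0, 1, M}. -/
def IsDigits (M : ℝ) (u : ℕ → ℝ) : Prop :=
  ∀ k, u k = 0 ∨ u k = 1 ∨ u k = M

/-- u is the unique β-expansion of its value over {0, 1, M}. -/
def IsUniqueExpansion (M β : ℝ) (u : ℕ → ℝ) : Prop :=
  IsDigits M u ∧ ∀ v : ℕ → ℝ, IsDigits M v →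
    (∑' k : ℕ, v k / β ^ (k + 1)) = (∑' k : ℕ, u k / β ^ (k + 1)) → v = u

/-- G is the generalised golden ratio of the alphabet {0, 1, M}: below G only trivial
unique expansions, above G some non-trivial unique expansion. -/
def IsGGR (M G : ℝ) : Prop :=
  1 < G ∧
  (∀ β : ℝ, 1 < β → β < G → ∀ u : ℕ → ℝ, IsUniqueExpansion M β u →
    u = (fun _ => 0) ∨ u = (fun _ => M)) ∧
  (∀ β : ℝ, G < β → ∃ u : ℕ → ℝ, IsUniqueExpansion M β u ∧
    u ≠ (fun _ => 0) ∧ u ≠ (fun _ => M))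

namespace S15
open Filter

noncomputable def val (β : ℝ) (u : ℕ → ℝ) : ℝ := ∑' k, u k / β ^ (k + 1)

lemma summable_digits {β C : ℝ} (hβ : 1 < β) {u : ℕ → ℝ} (h0 : ∀ k, 0 ≤ u k)
    (h1 : ∀ k, u k ≤ C) : Summable (fun k => u k / β ^ (k + 1)) := by
  have hβ0 : (0:ℝ) < β := lt_trans one_pos hβ
  have hr0 : (0:ℝ) ≤ 1/β := by positivity
  have hr1 : 1/β < 1 := by rw [div_lt_one hβ0]; exact hβ
  refine Summable.of_nonneg_of_le
    (fun k => div_nonneg (h0 k) (by positivity)) (fun k => ?_)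
    (((summable_geometric_of_lt_one hr0 hr1).mul_left (C/β)))
  have hpow : (0:ℝ) < β ^ (k+1) := by positivity
  have h2 : u k / β ^ (k+1) ≤ C / β ^ (k+1) := (div_le_div_iff_of_pos_right hpow).mpr (h1 k)
  refine h2.trans (le_of_eq ?_)
  rw [one_div_pow]
  ring

lemma val_const_le {β C : ℝ} (hβ : 1 < β) (hC : 0 ≤ C) :
    (∑' k : ℕ, C / β ^ (k + 1)) = C / (β - 1) := by
  have hβ0 : (0:ℝ) < β := lt_trans one_pos hβ
  have hr0 : (0:ℝ) ≤ 1/β := by positivity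
  have hr1 : 1/β < 1 := by rw [div_lt_one hβ0]; exact hβ
  have h : ∀ k : ℕ, C / β ^ (k+1) = (C/β) * (1/β)^k := by
    intro k; rw [one_div_pow]; ring
  rw [tsum_congr h, tsum_mul_left, tsum_geometric_of_lt_one hr0 hr1]
  have hβ1 : β - 1 ≠ 0 := by intro hc; linarith
  have he : (1:ℝ) - 1/β = (β-1)/β := by field_simp
  rw [he, inv_div]
  field_simp

lemma val_nonneg {β : ℝ} {u : ℕ → ℝ} (h0 : ∀ k, 0 ≤ u k) (hβ : 1 < β) : 0 ≤ val β u :=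
  tsum_nonneg (fun k => by
    have hb : (0:ℝ) < β := lt_trans one_pos hβ
    exact div_nonneg (h0 k) (by positivity))

lemma val_le {β C : ℝ} (hβ : 1 < β) {u : ℕ → ℝ} (h0 : ∀ k, 0 ≤ u k) (h1 : ∀ k, u k ≤ C) :
    val β u ≤ C / (β - 1) := by
  have hβ0 : (0:ℝ) < β := lt_trans one_pos hβ
  have hC : 0 ≤ C := le_trans (h0 0) (h1 0)
  rw [← val_const_le hβ hC]
  apply Summable.tsum_le_tsum _ (summable_digits hβ h0 h1)
    (summable_digits hβ (fun _ => hC) (fun _ => le_rfl))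
  intro k
  have hpow : (0:ℝ) < β ^ (k+1) := by positivity
  exact (div_le_div_iff_of_pos_right hpow).mpr (h1 k)

lemma val_succ {β C : ℝ} (hβ : 1 < β) {u : ℕ → ℝ} (h0 : ∀ k, 0 ≤ u k) (h1 : ∀ k, u k ≤ C) :
    val β u = (u 0 + val β (fun j => u (j + 1))) / β := by
  have hβ0 : (0:ℝ) < β := lt_trans one_pos hβ
  have hβ0' : β ≠ 0 := ne_of_gt hβ0
  have hs := summable_digits hβ h0 h1
  rw [val, Summable.tsum_eq_zero_add hs]
  have h : ∀ k : ℕ, u (k+1) / β ^ (k+1+1) = (1/β) * (u (k+1) / β ^ (k+1)) := by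
    intro k; ring
  rw [tsum_congr h, tsum_mul_left]
  show u 0 / β ^ 1 + 1/β * val β (fun j => u (j+1)) = _
  rw [pow_one]
  field_simp

lemma val_split {β C : ℝ} (hβ : 1 < β) {u : ℕ → ℝ} (h0 : ∀ k, 0 ≤ u k) (h1 : ∀ k, u k ≤ C)
    (k : ℕ) :
    val β u = (∑ j ∈ Finset.range k, u j / β ^ (j + 1)) + (1/β^k) * val β (fun j => u (j + k)) := by
  have hβ0 : (0:ℝ) < β := lt_trans one_pos hβ
  have hs := summable_digits hβ h0 h1 (C := C)
  rw [val, ← Summable.sum_add_tsum_nat_add k hs]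
  congr 1
  have h : ∀ j : ℕ, u (j+k) / β ^ (j+k+1) = (1/β^k) * (u (j+k) / β ^ (j+1)) := by
    intro j
    rw [show j+k+1 = (j+1)+k by omega, pow_add]
    rw [div_mul_eq_mul_div, one_mul, div_div]
  rw [tsum_congr h, tsum_mul_left]
  rfl

lemma val_zero_of {β : ℝ} {u : ℕ → ℝ} (h : ∀ k, u k = 0) : val β u = 0 := by
  rw [val]
  convert tsum_zero with k
  rw [h k, zero_div]


section Greedy

variable {M β : ℝ}

/-- greedy digit -/
noncomputable def gd (M β S y : ℝ) : ℝ :=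
  if β*y ≤ S then 0 else if β*y ≤ S+1 then 1 else M

/-- greedy remainder sequence -/
noncomputable def gy (M β S x : ℝ) : ℕ → ℝ
  | 0 => x
  | n+1 => β * gy M β S x n - gd M β S (gy M β S x n)

lemma gd_digit (S y : ℝ) : gd M β S y = 0 ∨ gd M β S y = 1 ∨ gd M β S y = M := by
  unfold gd; split_ifs <;> simp

lemma exists_expansion (hM1 : 1 < M) (hM2 : M ≤ 2) (hβ : 1 < β) (hβM : β < 1 + M)
    (x : ℝ) (hx0 : 0 ≤ x) (hxS : x ≤ M / (β - 1)) :
    ∃ w : ℕ → ℝ, (∀ k, w k = 0 ∨ w k = 1 ∨ w k = M) ∧ val β w = x := by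
  have hβ0 : (0:ℝ) < β := lt_trans one_pos hβ
  have hβ1 : (0:ℝ) < β - 1 := by linarith
  set S := M / (β - 1) with hS
  have hSpos : 0 < S := by positivity
  have hS1 : 1 ≤ S := by
    rw [hS, le_div_iff₀ hβ1]; linarith
  have hSβ : β * S = S + M := by
    rw [hS]; field_simp; ring
  -- invariant
  have hinv : ∀ n, 0 ≤ gy M β S x n ∧ gy M β S x n ≤ S := by
    intro n
    induction n with
    | zero => exact ⟨hx0, hxS⟩
    | succ n ih =>
      obtain ⟨h0, h1⟩ := ih
      set y := gy M β S x n with hy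
      have hstep : gy M β S x (n+1) = β * y - gd M β S y := rfl
      rw [hstep]
      unfold gd
      split_ifs with hc1 hc2
      · constructor
        · simp; positivity
        · simpa using hc1
      · push_neg at hc1
        constructor
        · simp; linarith
        · simp; linarith
      · push_neg at hc1 hc2
        have hby : β * y ≤ S + M := by
          calc β * y ≤ β * S := by nlinarith
          _ = S + M := hSβ
        constructor
        · linarith
        · linarith
    -- end
  -- partial sums
  set w : ℕ → ℝ := fun n => gd M β S (gy M β S x n) with hw
  have hwd : ∀ k, w k = 0 ∨ w k = 1 ∨ w k = M := fun k => gd_digit _ _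
  have hw0 : ∀ k, 0 ≤ w k := by
    intro k; rcases hwd k with h|h|h <;> rw [h] <;> linarith
  have hwM : ∀ k, w k ≤ M := by
    intro k; rcases hwd k with h|h|h <;> rw [h] <;> linarith
  have hpartial : ∀ n, x = (∑ j ∈ Finset.range n, w j / β ^ (j+1)) + gy M β S x n / β ^ n := by
    intro n
    induction n with
    | zero => simp [gy]
    | succ n ih =>
      rw [Finset.sum_range_succ]
      have hstep : gy M β S x (n+1) = β * gy M β S x n - w n := rfl
      rw [hstep]
      have hp1 : (0:ℝ) < β ^ n := by positivity
      have hp2 : (0:ℝ) < β ^ (n+1) := by positivity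
      have key : gy M β S x n / β^n = w n / β^(n+1) + (β * gy M β S x n - w n)/β^(n+1) := by
        rw [pow_succ]
        field_simp
        ring
      conv_lhs => rw [ih]
      rw [key]
      ring
  refine ⟨w, hwd, ?_⟩
  -- HasSum
  have hsum := summable_digits hβ hw0 hwM
  have hval : HasSum (fun k => w k / β ^ (k+1)) x := by
    rw [hsum.hasSum_iff_tendsto_nat]
    have hgoal : Filter.Tendsto (fun n => x - gy M β S x n / β ^ n) Filter.atTop (nhds x) := by
      have h0 : Filter.Tendsto (fun n => gy M β S x n / β ^ n) Filter.atTop (nhds 0) := by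
        have hb : ∀ n : ℕ, gy M β S x n / β ^ n ≤ S * (1/β)^n := by
          intro n
          have hp : (0:ℝ) < β ^ n := by positivity
          rw [one_div_pow]
          calc gy M β S x n / β ^ n ≤ S / β ^ n := (div_le_div_iff_of_pos_right hp).mpr (hinv n).2
          _ = S * (1/β^n) := by ring
        have hc : Filter.Tendsto (fun n : ℕ => S * (1/β)^n) Filter.atTop (nhds 0) := by
          have ht : Filter.Tendsto (fun n : ℕ => (1/β)^n) Filter.atTop (nhds 0) := by
            apply tendsto_pow_atTop_nhds_zero_of_lt_one (by positivity)
            rw [div_lt_one hβ0]; exact hβ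
          simpa using ht.const_mul S
        exact squeeze_zero (fun n => div_nonneg (hinv n).1 (by positivity)) hb hc
      have := Filter.Tendsto.const_sub x h0
      simpa using this
    apply hgoal.congr
    intro n
    have := hpartial n
    linarith
  exact hval.tsum_eq

end Greedy

section Facts

variable {M β : ℝ} {u : ℕ → ℝ}

lemma digits_nonneg (hM1 : 1 < M) (hu : IsDigits M u) : ∀ k, 0 ≤ u k := by
  intro k; rcases hu k with h|h|h <;> rw [h] <;> linarith

lemma digits_le (hM1 : 1 < M) (hu : IsDigits M u) : ∀ k, u k ≤ M := by
  intro k; rcases hu k with h|h|h <;> rw [h] <;> linarith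

/-- tail value after position k -/
noncomputable def tl (β : ℝ) (u : ℕ → ℝ) (k : ℕ) : ℝ := val β (fun j => u (j + (k+1)))

lemma tl_nonneg (hM1 : 1 < M) (hβ : 1 < β) (hu : IsDigits M u) (k : ℕ) : 0 ≤ tl β u k :=
  val_nonneg (fun j => digits_nonneg hM1 hu _) hβ

lemma tl_le (hM1 : 1 < M) (hβ : 1 < β) (hu : IsDigits M u) (k : ℕ) :
    tl β u k ≤ M / (β - 1) :=
  val_le hβ (fun j => digits_nonneg hM1 hu _) (fun j => digits_le hM1 hu _)

lemma tl_rec (hM1 : 1 < M) (hβ : 1 < β) (hu : IsDigits M u) (k : ℕ) :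
    tl β u k = (u (k+1) + tl β u (k+1)) / β := by
  have h0 : ∀ j, 0 ≤ u (j + (k+1)) := fun j => digits_nonneg hM1 hu _
  have h1 : ∀ j, u (j + (k+1)) ≤ M := fun j => digits_le hM1 hu _
  rw [tl, val_succ hβ h0 h1]
  show (u (0+(k+1)) + val β (fun j => u (j+1+(k+1))))/β = _
  rw [Nat.zero_add]
  rw [show (fun j => u (j+1+(k+1))) = (fun j => u (j + (k+1+1))) from funext fun j => by congr 1; omega]
  rfl

lemma tl_zero_of {k : ℕ} (hβ : 1 < β) (h : ∀ j, k+1 ≤ j → u j = 0) : tl β u k = 0 := by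
  apply val_zero_of
  intro j
  exact h _ (by omega)

lemma not_swap (hM1 : 1 < M) (hM2 : M ≤ 2) (hβ : 1 < β) (hβM : β < 1 + M)
    (hu : IsUniqueExpansion M β u) (k : ℕ) (d' : ℝ)
    (hd : d' = 0 ∨ d' = 1 ∨ d' = M) (hne : d' ≠ u k)
    (hr0 : 0 ≤ u k + tl β u k - d')
    (hr1 : u k + tl β u k - d' ≤ M / (β - 1)) : False := by
  have hud := hu.1
  have hu0 := digits_nonneg hM1 hud
  have huM := digits_le hM1 hud
  obtain ⟨w, hwd, hwval⟩ := exists_expansion hM1 hM2 hβ hβM _ hr0 hr1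
  classical
  set v : ℕ → ℝ := fun j => if j < k then u j else if j = k then d' else w (j - (k+1)) with hv
  have hvd : IsDigits M v := by
    intro j
    by_cases h1 : j < k
    · simp only [hv, if_pos h1]; exact hud j
    · by_cases h2 : j = k
      · simp only [hv, if_neg h1, if_pos h2]; exact hd
      · simp only [hv, if_neg h1, if_neg h2]; exact hwd _
  have hv0 := digits_nonneg hM1 hvd
  have hvM := digits_le hM1 hvd
  have hvk : v k = d' := by simp [hv]
  have hsplitu := val_split hβ hu0 huM k
  have hsplitv := val_split hβ hv0 hvM k
  have hpre : (∑ j ∈ Finset.range k, v j / β ^ (j+1)) = ∑ j ∈ Finset.range k, u j / β ^ (j+1) := by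
    apply Finset.sum_congr rfl
    intro j hj
    rw [Finset.mem_range] at hj
    simp [hv, if_pos hj]
  have hvv : val β (fun j => v (j + k)) = (d' + (u k + tl β u k - d')) / β := by
    rw [val_succ hβ (fun j => hv0 _) (fun j => hvM _)]
    show (v (0+k) + val β (fun j => v (j+1+k)))/β = _
    have e0 : v (0 + k) = d' := by
      rw [Nat.zero_add]; exact hvk
    have e1 : (fun j => v (j + 1 + k)) = w := by
      funext j
      have h1 : ¬ (j + 1 + k < k) := by omega
      have h2 : ¬ (j + 1 + k = k) := by omega
      simp only [hv, if_neg h1, if_neg h2]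
      congr 1
      omega
    rw [e0, e1, hwval]
  have hutail : val β (fun j => u (j + k)) = (u k + tl β u k) / β := by
    have h0 : ∀ j, 0 ≤ u (j + k) := fun j => hu0 _
    have h1 : ∀ j, u (j + k) ≤ M := fun j => huM _
    rw [val_succ hβ h0 h1]
    show (u (0+k) + val β (fun j => u (j+1+k)))/β = _
    rw [Nat.zero_add]
    rw [show (fun j => u (j+1+k)) = (fun j => u (j + (k+1))) from funext fun j => by congr 1; omega]
    rfl
  have hveq : val β v = val β u := by
    rw [hsplitu, hsplitv, hpre, hvv, hutail]
    congr 1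
    ring
  have hfinal := hu.2 v hvd (by simpa [val] using hveq)
  rw [hfinal] at hvk
  exact hne hvk.symm

variable (hM1 : 1 < M) (hM2 : M ≤ 2) (hβ : 1 < β) (hβM : β < 1 + M)
  (hu : IsUniqueExpansion M β u)

include hM1 hM2 hβ hβM hu

lemma fact0 {k : ℕ} (hk : u k = 0) : tl β u k < 1 := by
  by_contra hc
  push_neg at hc
  refine not_swap hM1 hM2 hβ hβM hu k 1 (by tauto) (by rw [hk]; norm_num) ?_ ?_
  · rw [hk]; linarith
  · rw [hk]
    have := tl_le hM1 hβ hu.1 k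
    linarith

lemma fact1a {k : ℕ} (hk : u k = 1) : tl β u k < M - 1 := by
  by_contra hc
  push_neg at hc
  refine not_swap hM1 hM2 hβ hβM hu k M (by tauto) (by rw [hk]; intro hc2; linarith) ?_ ?_
  · rw [hk]; linarith
  · rw [hk]
    have := tl_le hM1 hβ hu.1 k
    linarith

lemma fact1b {k : ℕ} (hk : u k = 1) : M/(β-1) - 1 < tl β u k := by
  by_contra hc
  push_neg at hc
  refine not_swap hM1 hM2 hβ hβM hu k 0 (by tauto) (by rw [hk]; norm_num) ?_ ?_
  · rw [hk]
    have := tl_nonneg hM1 hβ hu.1 k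
    linarith
  · rw [hk]; linarith

lemma factM {k : ℕ} (hk : u k = M) : M/(β-1) - (M-1) < tl β u k := by
  by_contra hc
  push_neg at hc
  refine not_swap hM1 hM2 hβ hβM hu k 1 (by tauto) (by rw [hk]; intro hc2; linarith) ?_ ?_
  · rw [hk]
    have := tl_nonneg hM1 hβ hu.1 k
    linarith
  · rw [hk]; linarith

end Facts

section Algebra

lemma pow_sub_pow_le {a b : ℝ} (ha : 0 ≤ a) (hab : a ≤ b) (n : ℕ) :
    b^(n+1) - a^(n+1) ≤ (n+1) * b^n * (b - a) := by
  induction n with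
  | zero => simp
  | succ n ih =>
    have hb : 0 ≤ b := le_trans ha hab
    have h1 : a^(n+1) ≤ b^(n+1) := pow_le_pow_left₀ ha hab _
    have e1 : b^(n+1+1) = b*(b*b^n) := by ring
    have e2 : a^(n+1+1) = a*(a*a^n) := by ring
    have e3 : b^(n+1) = b*b^n := by ring
    have e4 : a^(n+1) = a*a^n := by ring
    rw [e3, e4] at ih h1
    rw [e1, e2, e3]
    push_cast
    nlinarith [ih, h1, mul_le_mul_of_nonneg_left ih hb,
      mul_le_mul_of_nonneg_right h1 (show (0:ℝ) ≤ b - a by linarith)]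

lemma nat_lt_two_pow' (n : ℕ) : (n:ℝ) + 1 ≤ 2^n := by
  have h2 : (n+1 : ℕ) ≤ 2^n := Nat.lt_two_pow_self
  calc ((n:ℝ)+1) = ((n+1 : ℕ) : ℝ) := by push_cast; ring
  _ ≤ ((2^n : ℕ) : ℝ) := by exact_mod_cast h2
  _ = 2^n := by push_cast; ring

/-- strict monotonicity of f(β)=(β-1)β^h/(β^h-1) at 2 vs β>2, in cross-multiplied form -/
lemma fmono {h : ℕ} (hh : 1 ≤ h) {β : ℝ} (hβ : 2 < β) :
    (2:ℝ)^h * (β^h - 1) < (β-1) * β^h * (2^h - 1) := by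
  obtain ⟨n, rfl⟩ : ∃ n, h = n + 1 := ⟨h - 1, by omega⟩
  have hb0 : (0:ℝ) < β := by linarith
  have hpow : (2:ℝ)^n ≤ β^n := pow_le_pow_left₀ (by norm_num) (le_of_lt hβ) n
  have hc0 : (0:ℝ) < β^n := by positivity
  have hd0 : (0:ℝ) < 2^n := by positivity
  have key1 : β^(n+1) - 2^(n+1) ≤ (n+1)*β^n*(β-2) :=
    pow_sub_pow_le (by norm_num) (le_of_lt hβ) n
  have h2n : ((n:ℝ)+1) ≤ 2^n := nat_lt_two_pow' n
  have hβn1 : (1:ℝ) ≤ β^n := one_le_pow₀ (by linarith)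
  have bracket : ((n:ℝ)+1)*β^n*(β-1) < 2^(n+1)*(β^(n+1) - 1) := by
    have hp : β^(n+1) = β^n*β := by ring
    have e1 : β^n*(β-1) ≤ β^(n+1) - 1 := by nlinarith
    have e2 : ((n:ℝ)+1) < 2^(n+1) := by
      have hq : (2:ℝ)^(n+1) = 2*2^n := by ring
      nlinarith
    have e3 : (0:ℝ) < β^n*(β-1) := by nlinarith
    nlinarith
  have key2 : (β^(n+1) - 2^(n+1))*(β-1) ≤ ((n:ℝ)+1)*β^n*(β-2)*(β-1) :=
    mul_le_mul_of_nonneg_right key1 (by linarith)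
  nlinarith [mul_pos (show (0:ℝ) < β - 2 by linarith)
    (show (0:ℝ) < 2^(n+1)*(β^(n+1) - 1) - ((n:ℝ)+1)*β^n*(β-1) by linarith)]

lemma psi_step {β G A B ν : ℝ} (hβ2 : 2 < β) (hβG : β ≤ G) (hA2 : 2 ≤ A) (hνA : ν ≤ A)
    (hAB : A ≤ B) (hB2 : 2 ≤ B) (hν0 : 0 ≤ ν)
    (hkey : B*G - A*β ≤ ν*B*(G-β)) :
    (β-1)*(G*(B-1)) ≤ ((G-1) + (G-β)*(G*(B-1))) * (β*(A-1)) := by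
  have hG2 : 2 < G := lt_of_lt_of_le hβ2 hβG
  have hDa : 0 < β*(A-1) := by nlinarith
  have hDb : 0 < G*(B-1) := by nlinarith
  have hGβ : 0 ≤ G - β := by linarith
  have c2 : G*(B-1) - β*(A-1) ≤ ν*B*(G-β) := by nlinarith
  have c3 : (β-1)*(G*(B-1) - β*(A-1)) ≤ (β-1)*(ν*B*(G-β)) :=
    mul_le_mul_of_nonneg_left c2 (by linarith)
  have q1 : (β-1)*ν ≤ (β*G/4)*A := by
    have w1 : β - 1 ≤ β*G/4 := by nlinarith [sq_nonneg (β-2)]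
    have w2 : (β-1)*ν ≤ (β*G/4)*ν := mul_le_mul_of_nonneg_right w1 hν0
    have w3 : (β*G/4)*ν ≤ (β*G/4)*A := mul_le_mul_of_nonneg_left hνA (by nlinarith)
    linarith
  have r1 : A*B/4 ≤ (A-1)*(B-1) := by
    nlinarith [mul_nonneg (show (0:ℝ) ≤ A-2 by linarith) (show (0:ℝ) ≤ B-2 by linarith)]
  have q2 : (β-1)*(ν*B) ≤ (β*G/4)*(A*B) := by
    have := mul_le_mul_of_nonneg_right q1 (show (0:ℝ) ≤ B by linarith)
    nlinarith [this]
  have q3 : (β*G/4)*(A*B) ≤ (β*(A-1))*(G*(B-1)) := by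
    have := mul_le_mul_of_nonneg_left r1 (show (0:ℝ) ≤ β*G by nlinarith)
    nlinarith [this]
  have c4 : (β-1)*(ν*B) ≤ (β*(A-1))*(G*(B-1)) := le_trans q2 q3
  have c5 : (G-β)*((β-1)*(ν*B)) ≤ (G-β)*((β*(A-1))*(G*(B-1))) :=
    mul_le_mul_of_nonneg_left c4 hGβ
  have c1 : 0 ≤ (G-β)*(β*(A-1)) := mul_nonneg hGβ (le_of_lt hDa)
  nlinarith [c3, c5, c1]

/-- Key inequality for part II, step 13: φ(β) ≤ M for 2 < β ≤ G. -/
lemma keyIneq {h : ℕ} (hh : 1 ≤ h) {β G m M : ℝ} (hβ2 : 2 < β) (hβG : β ≤ G)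
    (hm : G^h = m) (hM : M = m/(m-1)) (hm1 : 1 < m) (hGM : (G-1)^2 ≤ M) :
    (β-1) + (β-1)/(β*(β^h-1)) ≤ M := by
  have hG2 : 2 < G := lt_of_lt_of_le hβ2 hβG
  have hβ0 : (0:ℝ) < β := by linarith
  have hG0 : (0:ℝ) < G := by linarith
  have h2h : (2:ℝ)^h ≤ β^h := pow_le_pow_left₀ (by norm_num) (le_of_lt hβ2) h
  have h2h2 : (2:ℝ) ≤ 2^h := by
    calc (2:ℝ) = 2^1 := by norm_num
    _ ≤ 2^h := pow_le_pow_right₀ (by norm_num) hh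
  have hβh2 : (2:ℝ) ≤ β^h := le_trans h2h2 h2h
  have hβhG : β^h ≤ G^h := pow_le_pow_left₀ (le_of_lt hβ0) hβG h
  have hGh2 : (2:ℝ) ≤ G^h := le_trans hβh2 hβhG
  have hDa : (0:ℝ) < β*(β^h - 1) := by nlinarith
  have hDb : (0:ℝ) < G*(G^h - 1) := by nlinarith
  -- part 1 : ψ(β) ≤ ψ(G) + (G-β)
  have part1 : (β-1)/(β*(β^h-1)) ≤ (G-1)/(G*(G^h-1)) + (G - β) := by
    rw [div_add' _ _ _ (ne_of_gt hDb), div_le_div_iff₀ hDa hDb]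
    obtain ⟨n, rfl⟩ : ∃ n, h = n + 1 := ⟨h - 1, by omega⟩
    have key2 := pow_sub_pow_le (le_of_lt hβ0) hβG (n+1)
    push_cast at key2
    have hpG : G^(n+1+1) = G^(n+1)*G := by ring
    have hpβ : β^(n+1+1) = β^(n+1)*β := by ring
    have hνA : ((n:ℝ)+1+1) ≤ β^(n+1) := by
      have a1 := nat_lt_two_pow' n
      have a1' : (1:ℝ) ≤ 2^n := one_le_pow₀ (by norm_num)
      have a2 : (2:ℝ)^(n+1) ≤ β^(n+1) := pow_le_pow_left₀ (by norm_num) (le_of_lt hβ2) (n+1)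
      have a3 : (2:ℝ)^(n+1) = 2^n + 2^n := by ring
      linarith
    have hkey : G^(n+1)*G - β^(n+1)*β ≤ ((n:ℝ)+1+1)*G^(n+1)*(G-β) := by
      rw [← hpG, ← hpβ]
      linarith [key2]
    have := psi_step hβ2 hβG hβh2 hνA hβhG hGh2
      (by positivity : (0:ℝ) ≤ (n:ℝ)+1+1)
      (by linarith [hkey] : G^(n+1)*G - β^(n+1)*β ≤ ((n:ℝ)+1+1)*G^(n+1)*(G-β))
    linarith [this]
  -- part 2 : (G-1) + ψ(G) ≤ M
  have hm0 : (0:ℝ) < m - 1 := by linarith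
  have hGM2 : (G-1)^2 * (m-1) ≤ m := by
    rw [hM] at hGM
    calc (G-1)^2 * (m-1) ≤ (m/(m-1)) * (m-1) :=
          mul_le_mul_of_nonneg_right hGM (le_of_lt hm0)
    _ = m := by field_simp
  have part2 : (G-1) + (G-1)/(G*(G^h-1)) ≤ M := by
    have hGh : G*(G^h - 1) = G*(m-1) := by rw [hm]
    have hpos : (0:ℝ) < G*(m-1) := by positivity
    have key1 : (G-1)*(G*(m-1)) + (G-1) ≤ G*m := by nlinarith [hGM2]
    have h2' : G - 1 + (G-1)/(G*(m-1)) = ((G-1)*(G*(m-1)) + (G-1))/(G*(m-1)) := by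
      field_simp
    rw [hGh, hM, h2', div_le_div_iff₀ hpos hm0]
    nlinarith [mul_le_mul_of_nonneg_right key1 (le_of_lt hm0)]
  linarith

end Algebra

section PartIII

variable (h : ℕ) (β : ℝ)

/-- periodic pattern (1 0^(h-1))^ω shifted by r -/
noncomputable def pat (h : ℕ) (r : ℕ) : ℕ → ℝ := fun j => if h ∣ (j + r) then 1 else 0

noncomputable def V (h : ℕ) (β : ℝ) (r : ℕ) : ℝ := val β (pat h r)

lemma pat_nonneg (r j : ℕ) : 0 ≤ pat h r j := by
  rw [pat]; split_ifs <;> norm_num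

lemma pat_le_one (r j : ℕ) : pat h r j ≤ 1 := by
  rw [pat]; split_ifs <;> norm_num

lemma pat_succ (r : ℕ) : (fun j => pat h r (j + 1)) = pat h (r+1) := by
  funext j
  show (if h ∣ (j + 1 + r) then (1:ℝ) else 0) = (if h ∣ (j + (r+1)) then (1:ℝ) else 0)
  rw [show j + 1 + r = j + (r+1) from by omega]

lemma V_succ (hβ : 1 < β) (r : ℕ) :
    V h β r = ((if h ∣ r then (1:ℝ) else 0) + V h β (r+1))/β := by
  rw [V, val_succ hβ (pat_nonneg h r) (pat_le_one h r)]
  rw [pat_succ]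
  congr 2
  show (if h ∣ (0 + r) then (1:ℝ) else 0) = _
  rw [Nat.zero_add]

lemma V_periodic (r : ℕ) : V h β (r + h) = V h β r := by
  rw [V, V]
  congr 1
  funext j
  show (if h ∣ (j + (r+h)) then (1:ℝ) else 0) = (if h ∣ (j + r) then (1:ℝ) else 0)
  rw [show j + (r+h) = (j+r) + h from by omega]
  congr 1
  exact propext (Nat.dvd_add_self_right)

lemma V_nonneg (hβ : 1 < β) (r : ℕ) : 0 ≤ V h β r :=
  val_nonneg (pat_nonneg h r) hβ

variable (hh : 1 ≤ h) (hβ : 1 < β)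
include hh hβ

lemma V_step : ∀ i, i + 1 ≤ h → V h β (i+1) = β^i * V h β 1 := by
  intro i
  induction i with
  | zero => intro _; simp
  | succ i ih =>
    intro hle
    have hi : i + 1 ≤ h := by omega
    have hndvd : ¬ h ∣ (i+1) := Nat.not_dvd_of_pos_of_lt (by omega) (by omega)
    have := V_succ h β hβ (i+1)
    rw [if_neg hndvd] at this
    rw [ih hi] at this
    have hβ0 : β ≠ 0 := by intro hc; rw [hc] at hβ; linarith
    field_simp at this
    rw [show i + 1 + 1 = i + 2 from rfl] at *
    rw [show (i+2 : ℕ) = (i+1)+1 from rfl]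
    rw [pow_succ]
    linarith [this]

lemma V_one_eq : V h β 1 = 1/(β^h - 1) := by
  have hβ0 : (0:ℝ) < β := by linarith
  have hβh : 1 < β^h := one_lt_pow₀ hβ (by omega)
  have h0 : V h β 0 = (1 + V h β 1)/β := by
    have := V_succ h β hβ 0
    rw [if_pos (dvd_zero h)] at this
    exact this
  have hVh : V h β h = β^(h-1) * V h β 1 := by
    obtain ⟨n, rfl⟩ : ∃ n, h = n + 1 := ⟨h - 1, by omega⟩
    exact V_step (n+1) β hh hβ n le_rfl
  have hper : V h β h = V h β 0 := by
    have := V_periodic h β 0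
    simpa using this
  -- β^(h-1) * V1 = (1 + V1)/β  =>  β^h V1 = 1 + V1
  have heq : β^h * V h β 1 = 1 + V h β 1 := by
    have e : β * (β^(h-1) * V h β 1) = β * ((1 + V h β 1)/β) := by
      rw [← hVh, hper, h0]
    have e2 : β * β^(h-1) = β^h := by
      rw [← pow_succ']
      congr 1
      omega
    have e3 : β * ((1 + V h β 1)/β) = 1 + V h β 1 := by field_simp
    nlinarith [e, e2, e3]
  have hne : β^h - 1 ≠ 0 := by intro hc; linarith
  field_simp
  linarith [heq]

lemma V_formula : ∀ i, i + 1 ≤ h → V h β (i+1) = β^i/(β^h - 1) := by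
  intro i hi
  rw [V_step h β hh hβ i hi, V_one_eq h β hh hβ]
  ring

lemma V_zero_eq : V h β 0 = β^(h-1)/(β^h - 1) := by
  obtain ⟨n, rfl⟩ : ∃ n, h = n + 1 := ⟨h - 1, by omega⟩
  have h1 : V (n+1) β (n+1) = β^n/(β^(n+1) - 1) := V_formula (n+1) β hh hβ n le_rfl
  have h2 : V (n+1) β (0 + (n+1)) = V (n+1) β 0 := V_periodic (n+1) β 0
  rw [Nat.zero_add] at h2
  rw [← h2, h1]
  norm_num

lemma V_mod (r : ℕ) : V h β r = V h β (r % h) := by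
  induction r using Nat.strong_induction_on with
  | _ r ih =>
    by_cases hr : r < h
    · rw [Nat.mod_eq_of_lt hr]
    · push_neg at hr
      have h1 : r = (r - h) + h := by omega
      have h2 : V h β r = V h β (r - h) := by
        conv_lhs => rw [h1]
        exact V_periodic h β (r - h)
      rw [h2, ih (r-h) (by omega)]
      congr 1
      exact (Nat.mod_eq_sub_mod hr).symm

lemma V_bound (r : ℕ) : V h β r ≤ β^(h-1)/(β^h - 1) := by
  have hβh : 1 < β^h := one_lt_pow₀ hβ (by omega)
  rw [V_mod h β hh hβ r]
  have hlt : r % h < h := Nat.mod_lt r (by omega)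
  rcases Nat.eq_zero_or_pos (r % h) with h0|h0
  · rw [h0, V_zero_eq h β hh hβ]
  · obtain ⟨i, hi⟩ : ∃ i, r % h = i + 1 := ⟨r % h - 1, by omega⟩
    rw [hi, V_formula h β hh hβ i (by omega)]
    apply (div_le_div_iff_of_pos_right (by linarith : (0:ℝ) < β^h - 1)).mpr
    exact pow_le_pow_right₀ (by linarith) (by omega)

lemma V_at_one {k : ℕ} (hk : h ∣ k) : V h β (k+1) = 1/(β^h - 1) := by
  obtain ⟨q, rfl⟩ := hk
  have e1 : (h*q + 1) % h = 1 % h := by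
    rw [Nat.mul_comm]
    rw [show q*h + 1 = 1 + q*h from by omega]
    exact Nat.add_mul_mod_self_right 1 q h
  rw [V_mod h β hh hβ, e1]
  rcases Nat.lt_or_ge 1 h with h1|h1
  · rw [Nat.mod_eq_of_lt h1]
    have := V_formula h β hh hβ 0 (by omega)
    simpa using this
  · have hh1 : h = 1 := by omega
    subst hh1
    rw [Nat.mod_self]
    have := V_zero_eq 1 β hh hβ
    simpa using this

end PartIII

lemma partIII {h : ℕ} (hh : 1 ≤ h) {m M G β : ℝ} (hMdef : M = m/(m-1))
    (hm2 : (2:ℝ)^h ≤ m) (hG : G^h = m) (hG2 : 2 ≤ G) (hβ : G < β) :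
    ∃ u : ℕ → ℝ, IsUniqueExpansion M β u ∧ u ≠ (fun _ => 0) ∧ u ≠ (fun _ => M) := by
  classical
  have h2h2 : (2:ℝ) ≤ 2^h := by
    calc (2:ℝ) = 2^1 := by norm_num
    _ ≤ 2^h := pow_le_pow_right₀ (by norm_num) hh
  have hm2' : (2:ℝ) ≤ m := le_trans h2h2 hm2
  have hm1 : (1:ℝ) < m := by linarith
  have hm0 : (0:ℝ) < m - 1 := by linarith
  have hM1 : 1 < M := by rw [hMdef]; rw [lt_div_iff₀ hm0]; linarith
  have hM2 : M ≤ 2 := by rw [hMdef]; rw [div_le_iff₀ hm0]; linarith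
  have hβ2 : 2 < β := lt_of_le_of_lt hG2 hβ
  have hβ1 : 1 < β := by linarith
  have hβ0 : (0:ℝ) < β := by linarith
  have hβh : m < β^h := by
    calc m = G^h := hG.symm
    _ < β^h := pow_lt_pow_left₀ hβ (by linarith) (by omega)
  have hβh1 : (1:ℝ) < β^h := by linarith
  have hMm1 : M - 1 = 1/(m-1) := by rw [hMdef]; field_simp; ring
  -- the candidate
  set u : ℕ → ℝ := pat h 0 with hu
  have hud : IsDigits M u := by
    intro k
    rw [hu, pat]
    split_ifs <;> tauto
  have hu0 : u 0 = 1 := by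
    rw [hu, pat]
    simp
  -- tails of u
  have hTu : ∀ k, tl β u k = V h β (k+1) := by
    intro k
    rw [tl, V]
    rfl
  -- numeric conditions
  have condA : 1/(β^h - 1) < M - 1 := by
    rw [hMm1]
    exact one_div_lt_one_div_of_lt hm0 (by linarith)
  have condB : M/(β-1) - 1/(β^h-1) < 1 := by
    have hf := fmono hh hβ2
    have hMc : M * (2^h - 1) ≤ 2^h := by
      rw [hMdef, div_mul_eq_mul_div, div_le_iff₀ hm0]
      nlinarith
    have hMf : M * (β^h - 1) < (β-1)*β^h := by
      by_contra hc
      push_neg at hc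
      have h1 := mul_le_mul_of_nonneg_right hc (show (0:ℝ) ≤ 2^h - 1 by linarith)
      have h2 := mul_le_mul_of_nonneg_right hMc (show (0:ℝ) ≤ β^h - 1 by linarith)
      nlinarith [h1, h2, hf]
    rw [div_sub_div _ _ (by linarith : β - 1 ≠ 0) (by linarith : β^h - 1 ≠ 0)]
    rw [div_lt_one (by nlinarith : (0:ℝ) < (β-1)*(β^h-1))]
    nlinarith [hMf]
  have condC : β^(h-1)/(β^h - 1) < 1 := by
    rw [div_lt_one (by linarith)]
    obtain ⟨n, rfl⟩ : ∃ n, h = n + 1 := ⟨h - 1, by omega⟩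
    have e : β^(n+1) = β^n * β := by ring
    have h1 : (1:ℝ) ≤ β^n := one_le_pow₀ (by linarith)
    have e2 : (n+1) - 1 = n := by omega
    rw [e2, e]
    nlinarith
  refine ⟨u, ⟨hud, ?_⟩, ?_, ?_⟩
  · -- uniqueness
    intro v hvd hval
    by_contra hne
    have hex : ∃ k, v k ≠ u k := by
      by_contra hc
      push_neg at hc
      exact hne (funext hc)
    set k := Nat.find hex with hk
    have hkne : v k ≠ u k := Nat.find_spec hex
    have hmin : ∀ j, j < k → v j = u j := by
      intro j hj
      by_contra hc
      exact Nat.find_min hex hj hc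
    -- split values at k
    have hv0 := digits_nonneg hM1 hvd
    have hvM := digits_le hM1 hvd
    have hu0' := digits_nonneg hM1 hud
    have huM' := digits_le hM1 hud
    have hsv := val_split hβ1 hv0 hvM k
    have hsu := val_split hβ1 hu0' huM' k
    have hvalv : val β v = val β u := hval
    have hpre : (∑ j ∈ Finset.range k, v j / β ^ (j+1)) = ∑ j ∈ Finset.range k, u j / β ^ (j+1) := by
      apply Finset.sum_congr rfl
      intro j hj
      rw [Finset.mem_range] at hj
      rw [hmin j hj]
    have htails : val β (fun j => v (j + k)) = val β (fun j => u (j + k)) := by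
      have hpow : (0:ℝ) < 1/β^k := by positivity
      have := hsv.symm.trans (hvalv.trans hsu)
      rw [hpre] at this
      have h2 : (1/β^k) * val β (fun j => v (j + k)) = (1/β^k) * val β (fun j => u (j + k)) := by
        linarith
      exact mul_left_cancel₀ (ne_of_gt hpow) h2
    have hvtail : val β (fun j => v (j + k)) = (v k + tl β v k)/β := by
      rw [val_succ hβ1 (fun j => hv0 _) (fun j => hvM _)]
      show (v (0+k) + val β (fun j => v (j+1+k)))/β = _
      rw [Nat.zero_add]
      rw [show (fun j => v (j+1+k)) = (fun j => v (j + (k+1))) from funext fun j => by congr 1; omega]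
      rfl
    have hutail : val β (fun j => u (j + k)) = (u k + tl β u k)/β := by
      rw [val_succ hβ1 (fun j => hu0' _) (fun j => huM' _)]
      show (u (0+k) + val β (fun j => u (j+1+k)))/β = _
      rw [Nat.zero_add]
      rw [show (fun j => u (j+1+k)) = (fun j => u (j + (k+1))) from funext fun j => by congr 1; omega]
      rfl
    have hkey : v k + tl β v k = u k + tl β u k := by
      rw [hvtail, hutail] at htails
      field_simp at htails
      exact htails
    have hTv0 : 0 ≤ tl β v k := tl_nonneg hM1 hβ1 hvd k
    have hTvS : tl β v k ≤ M/(β-1) := tl_le hM1 hβ1 hvd k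
    by_cases hdvd : h ∣ k
    · -- u k = 1, tail = 1/(β^h-1)
      have huk : u k = 1 := by rw [hu, pat]; simp [hdvd]
      have hTuk : tl β u k = 1/(β^h - 1) := by rw [hTu k]; exact V_at_one h β hh hβ1 hdvd
      rcases hvd k with hvk|hvk|hvk
      · -- v k = 0 : needs M/(β-1) < 1 + 1/(β^h-1), from condB
        rw [hvk, huk, hTuk] at hkey
        have : tl β v k = 1 + 1/(β^h-1) := by linarith
        rw [this] at hTvS
        linarith [condB]
      · exact hkne (by rw [hvk, huk])
      · -- v k = M : M - 1 ≤ tail = 1/(β^h-1) < M-1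
        rw [hvk, huk, hTuk] at hkey
        have : M - 1 = 1/(β^h-1) - tl β v k := by linarith
        linarith [condA, hTv0]
    · -- u k = 0, tail < 1
      have huk : u k = 0 := by rw [hu, pat]; simp [hdvd]
      have hTuk : tl β u k ≤ β^(h-1)/(β^h - 1) := by rw [hTu k]; exact V_bound h β hh hβ1 (k+1)
      have hTuk1 : tl β u k < 1 := lt_of_le_of_lt hTuk condC
      rcases hvd k with hvk|hvk|hvk
      · exact hkne (by rw [hvk, huk])
      · rw [hvk, huk] at hkey
        linarith
      · rw [hvk, huk] at hkey
        linarith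
  · intro hc
    have := congrFun hc 0
    rw [hu0] at this
    norm_num at this
  · intro hc
    have := congrFun hc 0
    rw [hu0] at this
    linarith

set_option maxHeartbeats 2000000 in
lemma partII {h : ℕ} (hh : 1 ≤ h) {m M G β : ℝ} (hMdef : M = m/(m-1))
    (hm2 : (2:ℝ)^h ≤ m) (hG : G^h = m) (hG2 : 2 ≤ G) (hGM : (G-1)^2 ≤ M)
    (hβ1 : 1 < β) (hβG : β < G) (u : ℕ → ℝ) (hu : IsUniqueExpansion M β u) :
    u = (fun _ => 0) ∨ u = (fun _ => M) := by
  classical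
  -- numeric setup
  have h2h2 : (2:ℝ) ≤ 2^h := by
    calc (2:ℝ) = 2^1 := by norm_num
    _ ≤ 2^h := pow_le_pow_right₀ (by norm_num) hh
  have hm2' : (2:ℝ) ≤ m := le_trans h2h2 hm2
  have hm1 : (1:ℝ) < m := by linarith
  have hm0 : (0:ℝ) < m - 1 := by linarith
  have hM1 : 1 < M := by rw [hMdef]; rw [lt_div_iff₀ hm0]; linarith
  have hM2 : M ≤ 2 := by rw [hMdef]; rw [div_le_iff₀ hm0]; linarith
  have hβ0 : (0:ℝ) < β := by linarith
  have hMm1 : M - 1 = 1/(m-1) := by rw [hMdef]; field_simp; ring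
  have hMm : M = m*(M-1) := by rw [hMm1, hMdef]; field_simp
  have hβM2 : (β-1)^2 < M := by
    have h1 : β - 1 < G - 1 := by linarith
    have h2 : (0:ℝ) < β - 1 := by linarith
    nlinarith
  have hβM : β < 1 + M := by
    rcases le_or_gt (β - 1) 1 with hc|hc
    · linarith
    · nlinarith
  have hβm : β < m := by
    have : G ≤ G^h := le_self_pow₀ (by linarith) (by omega)
    linarith [hG ▸ this]
  have hβhm : β^h < m := by
    rw [← hG]
    exact pow_lt_pow_left₀ hβG (le_of_lt hβ0) (by omega)
  have hβh1 : (1:ℝ) < β^h := one_lt_pow₀ hβ1 (by omega)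
  have hSM : (M/(β-1))*(β-1) = M := div_mul_cancel₀ M (by linarith)
  have hS1 : 1 < M/(β-1) := by
    rw [lt_div_iff₀ (by linarith : (0:ℝ) < β - 1)]
    linarith
  -- facts
  have hud := hu.1
  have F0 : ∀ k, u k = 0 → tl β u k < 1 := fun k hk => fact0 hM1 hM2 hβ1 hβM hu hk
  have F1a : ∀ k, u k = 1 → tl β u k < M - 1 := fun k hk => fact1a hM1 hM2 hβ1 hβM hu hk
  have F1b : ∀ k, u k = 1 → M/(β-1) - 1 < tl β u k := fun k hk => fact1b hM1 hM2 hβ1 hβM hu hk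
  have FM : ∀ k, u k = M → M/(β-1) - (M-1) < tl β u k := fun k hk => factM hM1 hM2 hβ1 hβM hu hk
  -- transition restrictions
  have P1 : ∀ k, u k = 0 → u (k+1) ≠ M := by
    intro k h0 hMk
    have hX := F0 k h0
    have hrec := tl_rec hM1 hβ1 hud k
    rw [hMk] at hrec
    have h2 := FM (k+1) hMk
    have h3 : (M + (M/(β-1) - (M-1)))/β < tl β u k := by
      rw [hrec]
      exact (div_lt_div_iff_of_pos_right hβ0).mpr (by linarith)
    have h4 : M + (M/(β-1) - (M-1)) = 1 + M/(β-1) := by ring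
    have h5 : (1 + M/(β-1))/β < 1 := by rw [← h4]; linarith
    rw [div_lt_one hβ0] at h5
    have h6 : M/(β-1) < β - 1 := by linarith
    have h7 : (M/(β-1))*(β-1) < (β-1)*(β-1) :=
      mul_lt_mul_of_pos_right h6 (by linarith)
    rw [hSM] at h7
    nlinarith [h7, hβM2]
  have P2 : ∀ k, u k = 1 → u (k+1) ≠ M := by
    intro k h1 hMk
    have hXa := F1a k h1
    have hrec := tl_rec hM1 hβ1 hud k
    rw [hMk] at hrec
    have htl0 := tl_nonneg hM1 hβ1 hud (k+1)
    have h3 : M/β ≤ tl β u k := by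
      rw [hrec]
      exact (div_le_div_iff_of_pos_right hβ0).mpr (by linarith)
    -- M/β ≤ tl < M-1 ⇒ M < β(M-1) ⇒ m < β, contra
    have h4 : M < β*(M-1) := by
      have h5 := lt_of_le_of_lt h3 hXa
      rw [div_lt_iff₀ hβ0] at h5
      linarith [h5]
    have h6 : β*(M-1) < m*(M-1) := mul_lt_mul_of_pos_right hβm (by linarith)
    linarith [hMm, h4, h6]
  have afterOne : ∀ k, u k = 1 → ∀ j, u (k+j) = 0 ∨ u (k+j) = 1 := by
    intro k hk j
    induction j with
    | zero => right; exact hk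
    | succ j ih =>
      rcases hud (k+j+1) with hc|hc|hc
      · left; rw [show k+(j+1) = k+j+1 from by omega]; exact hc
      · right; rw [show k+(j+1) = k+j+1 from by omega]; exact hc
      · rcases ih with h0|h0
        · exact absurd hc (P1 (k+j) h0)
        · exact absurd hc (P2 (k+j) h0)
  have existsOneAfter : ∀ k, u k = 1 → ∃ n, 1 ≤ n ∧ u (k+n) = 1 := by
    intro k hk
    by_contra hc
    push_neg at hc
    have hz : ∀ j, k+1 ≤ j → u j = 0 := by
      intro j hj
      have h1 : k + (j - k) = j := by omega
      rcases afterOne k hk (j-k) with h0|h0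
      · rwa [h1] at h0
      · exact absurd h0 (hc (j-k) (by omega))
    have htl : tl β u k = 0 := tl_zero_of hβ1 hz
    have := F1b k hk
    rw [htl] at this
    linarith
  -- gap equation
  have gapEq : ∀ k n, 1 ≤ n → u (k+n) = 1 → (∀ i, 1 ≤ i → i < n → u (k+i) = 0) →
      β^n * tl β u k = 1 + tl β u (k+n) := by
    intro k n hn hkn hmid
    obtain ⟨n', rfl⟩ : ∃ n', n = n' + 1 := ⟨n - 1, by omega⟩
    have claim : ∀ i, i ≤ n' → tl β u (k+i) = β^i * tl β u k := by
      intro i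
      induction i with
      | zero => intro _; simp
      | succ i ih =>
        intro hi
        have hrec := tl_rec hM1 hβ1 hud (k+i)
        have h0 : u (k+i+1) = 0 := by
          rw [show k+i+1 = k+(i+1) from by omega]
          exact hmid (i+1) (by omega) (by omega)
        rw [h0] at hrec
        have := ih (by omega)
        have he : tl β u (k+(i+1)) = β * tl β u (k+i) := by
          rw [show k+(i+1) = k+i+1 from by omega]
          rw [hrec]
          field_simp
          ring
        rw [he, this]
        ring
    have hlast := tl_rec hM1 hβ1 hud (k+n')
    rw [show k+n'+1 = k+(n'+1) from by omega, hkn] at hlast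
    have := claim n' le_rfl
    rw [this] at hlast
    have : β^(n'+1) * tl β u k = β * (β^n' * tl β u k) := by ring
    rw [this, hlast]
    field_simp
  -- trivial or get a 1
  by_contra hcon
  push_neg at hcon
  obtain ⟨hne0, hneM⟩ := hcon
  have hexa : ∃ a, u a ≠ 0 := by
    by_contra hc
    push_neg at hc
    exact hne0 (funext hc)
  have hexb : ∃ b, u b ≠ M := by
    by_contra hc
    push_neg at hc
    exact hneM (funext hc)
  have honecase : ∃ p, u p = 1 := by
    by_contra hno
    push_neg at hno
    obtain ⟨b, hb⟩ := hexb
    have hb0 : u b = 0 := by rcases hud b with h|h|h; exact h; exact absurd h (hno b); exact absurd h hb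
    have hz : ∀ j, u (b + j) = 0 := by
      intro j
      induction j with
      | zero => exact hb0
      | succ j ih =>
        rcases hud (b+j+1) with h|h|h
        · rw [show b+(j+1) = b+j+1 from by omega]; exact h
        · exact absurd h (hno _)
        · exact absurd h (P1 (b+j) ih)
    obtain ⟨a, ha⟩ := hexa
    have haM : u a = M := by rcases hud a with h|h|h; exact absurd h ha; exact absurd h (hno a); exact h
    have hab : a < b := by
      by_contra hc
      push_neg at hc
      have := hz (a - b)
      rw [show b + (a-b) = a from by omega] at this
      rw [this] at haM
      linarith
    have hl : u (Nat.findGreatest (fun j => u j = M) b) = M :=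
      Nat.findGreatest_spec (P := fun j => u j = M) (le_of_lt hab) haM
    set l := Nat.findGreatest (fun j => u j = M) b with hldef
    have hafter : ∀ j, l+1 ≤ j → u j = 0 := by
      intro j hj
      rcases le_or_gt j b with hjb|hjb
      · have hnotP : ¬ (u j = M) :=
          Nat.findGreatest_is_greatest (P := fun j => u j = M) (by omega) hjb
        rcases hud j with h|h|h
        · exact h
        · exact absurd h (hno j)
        · exact absurd h hnotP
      · have := hz (j - b)
        rw [show b + (j-b) = j from by omega] at this
        exact this
    have htl : tl β u l = 0 := tl_zero_of hβ1 hafter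
    have := FM l hl
    rw [htl] at this
    linarith
  obtain ⟨p, hp⟩ := honecase
  -- β > 2
  have hβ2 : 2 < β := by
    have ha := F1a p hp
    have hb := F1b p hp
    have hlt : M/(β-1) < M := by linarith
    rw [div_lt_iff₀ (by linarith : (0:ℝ) < β-1)] at hlt
    nlinarith [hlt]
  -- key inequality  S - 1 ≥ 1/(β (β^h -1))
  have keyS : 1/(β*(β^h-1)) ≤ M/(β-1) - 1 := by
    have KI := keyIneq hh hβ2 (le_of_lt hβG) hG hMdef hm1 hGM
    have hd : (0:ℝ) < β*(β^h-1) := by nlinarith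
    have h1 : (β-1) * (1/(β*(β^h-1))) ≤ (β-1) * (M/(β-1) - 1) := by
      have e1 : (β-1) * (M/(β-1) - 1) = M - (β-1) := by
        calc (β-1) * (M/(β-1) - 1) = (M/(β-1))*(β-1) - (β-1) := by ring
        _ = M - (β-1) := by rw [hSM]
      have e2 : (β-1) * (1/(β*(β^h-1))) = (β-1)/(β*(β^h-1)) := by ring
      rw [e1, e2]
      linarith [KI]
    exact le_of_mul_le_mul_left h1 (by linarith : (0:ℝ) < β - 1)
  have hJt : M - 1 < 1/(β^h - 1) := by
    rw [hMm1]
    exact one_div_lt_one_div_of_lt (by linarith) (by linarith)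
  -- the set of tails at 1-positions
  set A : Set ℝ := {x : ℝ | ∃ k, u k = 1 ∧ tl β u k = x} with hA
  have hAne : A.Nonempty := ⟨tl β u p, p, hp, rfl⟩
  have hAbdd : BddAbove A := by
    refine ⟨M/(β-1), ?_⟩
    rintro x ⟨k, hk, rfl⟩
    exact tl_le hM1 hβ1 hud k
  have hAbdd0 : BddBelow A := by
    refine ⟨0, ?_⟩
    rintro x ⟨k, hk, rfl⟩
    exact tl_nonneg hM1 hβ1 hud k
  -- refined next-one
  have nextOne : ∀ k, u k = 1 → ∃ n, h ≤ n ∧ u (k+n) = 1 ∧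
      β^n * tl β u k = 1 + tl β u (k+n) := by
    intro k hk
    have hexQ : ∃ n, 1 ≤ n ∧ u (k+n) = 1 := existsOneAfter k hk
    obtain ⟨hn1, hkn⟩ := Nat.find_spec hexQ
    set n := Nat.find hexQ with hn
    have hmid : ∀ i, 1 ≤ i → i < n → u (k+i) = 0 := by
      intro i h1 h2
      have hnot := Nat.find_min hexQ h2
      rcases afterOne k hk i with h|h
      · exact h
      · exact absurd ⟨h1, h⟩ hnot
    have heq := gapEq k n hn1 hkn hmid
    refine ⟨n, ?_, hkn, heq⟩
    -- h ≤ n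
    have ha := F1a k hk
    have hb := F1b (k+n) hkn
    have hpn : (0:ℝ) < β^n := by positivity
    have h1 : β^n * (M-1) > M/(β-1) := by
      nlinarith [heq, mul_lt_mul_of_pos_left ha hpn]
    have h2 : β^n * (β-1) * (M-1) > M := by
      nlinarith [hSM, h1]
    have h3 : β^h < β^(n+1) := by
      have hMm' : (0:ℝ) < M - 1 := by linarith
      have h4 : β^n * (β-1) > m := by nlinarith [hMm, h2]
      have h5 : β^n * β > β^n * (β-1) := by nlinarith
      have h6 : β^(n+1) = β^n * β := by ring
      linarith [hβhm]
    have := (pow_lt_pow_iff_right₀ hβ1).mp h3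
    omega
  -- sup of tails at 1-positions is ≤ J
  have hσmem : tl β u p ∈ A := ⟨p, hp, rfl⟩
  have hσJ : sSup A ≤ 1/(β^h - 1) := by
    have hph : (0:ℝ) < β^h := by positivity
    have hstep : sSup A ≤ (1 + sSup A)/β^h := by
      apply csSup_le hAne
      rintro x ⟨k, hk, rfl⟩
      obtain ⟨n, hn, hkn, heq⟩ := nextOne k hk
      have h1 : tl β u (k+n) ≤ sSup A := le_csSup hAbdd ⟨k+n, hkn, rfl⟩
      have hpn : (0:ℝ) < β^n := by positivity
      have h2 : tl β u k = (1 + tl β u (k+n))/β^n := by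
        rw [eq_div_iff (ne_of_gt hpn)]
        linarith [heq]
      have hσ0 : 0 ≤ sSup A := le_trans (tl_nonneg hM1 hβ1 hud p) (le_csSup hAbdd hσmem)
      rw [h2]
      calc (1 + tl β u (k+n))/β^n ≤ (1 + sSup A)/β^n :=
            (div_le_div_iff_of_pos_right hpn).mpr (by linarith)
      _ ≤ (1 + sSup A)/β^h := by
            apply div_le_div_of_nonneg_left (by linarith) hph
            exact pow_le_pow_right₀ (by linarith) hn
    rw [le_div_iff₀ hph] at hstep
    rw [le_div_iff₀ (by linarith : (0:ℝ) < β^h - 1)]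
    nlinarith [hstep]
  -- dichotomy
  by_cases hbig : ∃ k n, u k = 1 ∧ u (k+n) = 1 ∧ h+1 ≤ n ∧ β^n * tl β u k = 1 + tl β u (k+n)
  · obtain ⟨k, n, hk, hkn, hn, heq⟩ := hbig
    have hb := F1b k hk
    have hpn : (0:ℝ) < β^n := by positivity
    have hp1 : (0:ℝ) < β^(h+1) := by positivity
    have h2 : tl β u k = (1 + tl β u (k+n))/β^n := by
      rw [eq_div_iff (ne_of_gt hpn)]
      linarith [heq]
    have h1 : tl β u (k+n) ≤ 1/(β^h-1) := le_trans (le_csSup hAbdd ⟨k+n, hkn, rfl⟩) hσJ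
    have hJ0 : (0:ℝ) ≤ 1 + 1/(β^h-1) := by
      have hq : (0:ℝ) < 1/(β^h-1) := one_div_pos.mpr (by linarith)
      linarith
    have h3 : tl β u k ≤ (1 + 1/(β^h-1))/β^(h+1) := by
      rw [h2]
      calc (1 + tl β u (k+n))/β^n ≤ (1 + 1/(β^h-1))/β^n :=
            (div_le_div_iff_of_pos_right hpn).mpr (by linarith)
      _ ≤ (1 + 1/(β^h-1))/β^(h+1) := by
            apply div_le_div_of_nonneg_left hJ0 hp1
            exact pow_le_pow_right₀ (by linarith) hn
    have h4 : (1 + 1/(β^h-1))/β^(h+1) = 1/(β*(β^h-1)) := by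
      have e : β^(h+1) = β^h * β := by ring
      have hne1 : β^h - 1 ≠ 0 := by linarith
      have hne2 : β ≠ 0 := by linarith
      rw [e]
      field_simp
      ring
    rw [h4] at h3
    linarith [keyS, hb, h3]
  · push_neg at hbig
    have hgap : ∀ k, u k = 1 → u (k+h) = 1 ∧ β^h * tl β u k = 1 + tl β u (k+h) := by
      intro k hk
      obtain ⟨n, hn, hkn, heq⟩ := nextOne k hk
      have hnh : n = h := by
        by_contra hc
        exact hbig k n hk hkn (by omega) heq
      rw [hnh] at hkn heq
      exact ⟨hkn, heq⟩
    have hι : ∀ x ∈ A, (1 + sInf A)/β^h ≤ x := by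
      rintro x ⟨k, hk, rfl⟩
      obtain ⟨hkh, heq⟩ := hgap k hk
      have h1 : sInf A ≤ tl β u (k+h) := csInf_le hAbdd0 ⟨k+h, hkh, rfl⟩
      have hph : (0:ℝ) < β^h := by positivity
      have h2 : tl β u k = (1 + tl β u (k+h))/β^h := by
        rw [eq_div_iff (ne_of_gt hph)]
        linarith [heq]
      rw [h2]
      exact (div_le_div_iff_of_pos_right hph).mpr (by linarith)
    have hstep2 : (1 + sInf A)/β^h ≤ sInf A := le_csInf hAne hι
    have hph : (0:ℝ) < β^h := by positivity
    rw [div_le_iff₀ hph] at hstep2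
    have hιJ : 1/(β^h - 1) ≤ sInf A := by
      rw [div_le_iff₀ (by linarith : (0:ℝ) < β^h - 1)]
      nlinarith [hstep2]
    have h5 : sInf A ≤ tl β u p := csInf_le hAbdd0 hσmem
    have h6 := F1a p hp
    linarith [hJt]

end S15

/-- for h ≥ 1 and 2^h ≤ m ≤ (1 + √(m/(m−1)))^h, the generalised golden
ratio of {0, 1, m/(m−1)} equals m^{1/h}. -/
theorem stmt_15 (h : ℕ) (hh : 1 ≤ h) (m : ℝ)
    (h1 : (2 : ℝ) ^ h ≤ m) (h2 : m ≤ (1 + Real.sqrt (m / (m - 1))) ^ h) :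
    IsGGR (m / (m - 1)) (m ^ ((1 : ℝ) / h)) := by
  have hh0 : ((h:ℝ)) ≠ 0 := by
    simp only [ne_eq, Nat.cast_eq_zero]
    omega
  have h2h2 : (2:ℝ) ≤ 2^h := by
    calc (2:ℝ) = 2^1 := by norm_num
    _ ≤ 2^h := pow_le_pow_right₀ (by norm_num) hh
  have hm2' : (2:ℝ) ≤ m := le_trans h2h2 h1
  have hm0 : (0:ℝ) < m := by linarith
  have hmm0 : (0:ℝ) < m - 1 := by linarith
  have hM0 : (0:ℝ) ≤ m/(m-1) := by positivity
  set G : ℝ := m ^ ((1:ℝ)/h) with hGdef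
  have hGh : G ^ h = m := by
    rw [hGdef, ← Real.rpow_natCast (m ^ ((1:ℝ)/h)) h, ← Real.rpow_mul (le_of_lt hm0)]
    rw [one_div_mul_cancel hh0, Real.rpow_one]
  have hG2 : 2 ≤ G := by
    have step : ((2:ℝ)^h) ^ ((1:ℝ)/h) ≤ m ^ ((1:ℝ)/h) :=
      Real.rpow_le_rpow (by positivity) h1 (by positivity)
    have e : ((2:ℝ)^h) ^ ((1:ℝ)/h) = 2 := by
      rw [← Real.rpow_natCast 2 h, ← Real.rpow_mul (by norm_num)]
      rw [mul_one_div_cancel hh0, Real.rpow_one]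
    rw [hGdef, ← e]
    exact step
  have hGs : G ≤ 1 + Real.sqrt (m/(m-1)) := by
    have hs0 : (0:ℝ) ≤ 1 + Real.sqrt (m/(m-1)) := by positivity
    have step : m ^ ((1:ℝ)/h) ≤ ((1 + Real.sqrt (m/(m-1)))^h) ^ ((1:ℝ)/h) :=
      Real.rpow_le_rpow (le_of_lt hm0) h2 (by positivity)
    have e : ((1 + Real.sqrt (m/(m-1)))^h) ^ ((1:ℝ)/h) = 1 + Real.sqrt (m/(m-1)) := by
      rw [← Real.rpow_natCast (1 + Real.sqrt (m/(m-1))) h, ← Real.rpow_mul hs0]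
      rw [mul_one_div_cancel hh0, Real.rpow_one]
    rw [hGdef, ← e]
    exact step
  have hGM : (G-1)^2 ≤ m/(m-1) := by
    have h3 : G - 1 ≤ Real.sqrt (m/(m-1)) := by linarith
    have h4 : (0:ℝ) ≤ G - 1 := by linarith
    calc (G-1)^2 ≤ (Real.sqrt (m/(m-1)))^2 := by
          apply pow_le_pow_left₀ h4 h3
    _ = m/(m-1) := Real.sq_sqrt hM0
  refine ⟨by linarith, ?_, ?_⟩
  · intro β hβ1 hβG u hu
    exact S15.partII hh rfl h1 hGh hG2 hGM hβ1 hβG u hu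
  · intro β hβ
    exact S15.partIII hh rfl h1 hGh hG2 hβ
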